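/- arXiv:1803.01133 — 2 statements merged into one kernel-verified Lean document; each statement's English description precedes it below -/
import Mathlib

section
/- Let T be a bounded m-isometry on a complex Hilbert space. Then the spectrum of T is contained in the closed unit disc; equivalently the spectral radius of T is at most 1. -/
open ContinuousLinearMap

variable {H : Type*} [NormedAddCommGroup H] [InnerProductSpace ℂ H] [CompleteSpace H]

/-- `beta T n = ∑_{j=0}^n (-1)^{n-j} C(n,j) (T*)^j T^j`. -/
noncomputable def beta (T : H →L[ℂ] H) (n : ℕ) : H →L[ℂ] H :=
  ∑ j ∈ Finset.range (n + 1),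
    ((-1 : ℂ) ^ (n - j) * (n.choose j : ℂ)) • ((ContinuousLinearMap.adjoint T) ^ j * T ^ j)

noncomputable def cc (n j : ℕ) : ℂ := (-1) ^ (n - j) * (n.choose j : ℂ)

lemma cc_succ_succ (n j : ℕ) (h : j ≤ n) : cc (n+1) (j+1) = cc n j - cc n (j+1) := by
  rcases eq_or_lt_of_le h with rfl | h
  · simp [cc, Nat.choose_succ_succ, Nat.choose_succ_self]
  · have h1 : n - j = (n - (j+1)) + 1 := by omega
    have h2 : n + 1 - (j + 1) = n - j := by omega
    simp only [cc, h2, Nat.choose_succ_succ, h1, pow_succ]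
    push_cast
    ring

lemma conj_A (T : H →L[ℂ] H) (j : ℕ) :
    ContinuousLinearMap.adjoint T * ((ContinuousLinearMap.adjoint T) ^ j * T ^ j) * T
      = (ContinuousLinearMap.adjoint T) ^ (j+1) * T ^ (j+1) := by
  rw [pow_succ T, pow_succ' (ContinuousLinearMap.adjoint T)]
  simp only [mul_assoc]

lemma beta_succ (T : H →L[ℂ] H) (n : ℕ) :
    beta T (n+1) = ContinuousLinearMap.adjoint T * beta T n * T - beta T n := by
  have hconj : ContinuousLinearMap.adjoint T * beta T n * T
      = ∑ j ∈ Finset.range (n+1), cc n j • ((ContinuousLinearMap.adjoint T) ^ (j+1) * T ^ (j+1)) := by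
    rw [beta]
    rw [Finset.mul_sum, Finset.sum_mul]
    refine Finset.sum_congr rfl fun j hj => ?_
    rw [mul_smul_comm, smul_mul_assoc, conj_A]
    rfl
  have hbeta : beta T n
      = ∑ j ∈ Finset.range n, cc n (j+1) • ((ContinuousLinearMap.adjoint T) ^ (j+1) * T ^ (j+1))
        + cc n 0 • ((ContinuousLinearMap.adjoint T) ^ 0 * T ^ 0) := by
    rw [beta, Finset.sum_range_succ']; rfl
  rw [hconj, hbeta, beta, Finset.sum_range_succ']
  have key : ∀ j ∈ Finset.range (n+1),
      cc (n+1) (j+1) • ((ContinuousLinearMap.adjoint T) ^ (j+1) * T ^ (j+1))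
        = cc n j • ((ContinuousLinearMap.adjoint T) ^ (j+1) * T ^ (j+1))
          - cc n (j+1) • ((ContinuousLinearMap.adjoint T) ^ (j+1) * T ^ (j+1)) := by
    intro j hj
    rw [← sub_smul, ← cc_succ_succ n j (Nat.lt_succ_iff.mp (Finset.mem_range.mp hj))]
  rw [show (∑ j ∈ Finset.range (n+1), ((-1:ℂ)^(n+1-(j+1)) * ((n+1).choose (j+1) : ℂ)) •
        ((ContinuousLinearMap.adjoint T) ^ (j+1) * T ^ (j+1)))
      = ∑ j ∈ Finset.range (n+1), (cc n j • ((ContinuousLinearMap.adjoint T) ^ (j+1) * T ^ (j+1))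
          - cc n (j+1) • ((ContinuousLinearMap.adjoint T) ^ (j+1) * T ^ (j+1)))
    from Finset.sum_congr rfl key]
  rw [Finset.sum_sub_distrib]
  rw [Finset.sum_range_succ (fun j => cc n (j+1) • ((ContinuousLinearMap.adjoint T) ^ (j+1) * T ^ (j+1)))]
  have hz : cc n (n+1) = 0 := by simp [cc, Nat.choose_succ_self]
  have h0 : ((-1:ℂ)^(n+1-0) * ((n+1).choose 0 : ℂ)) = -(cc n 0) := by
    simp [cc, pow_succ]
  rw [hz, h0]
  simp only [zero_smul, add_zero, neg_smul]
  abel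

lemma beta_zero_of_le (T : H →L[ℂ] H) (m : ℕ) (hT : beta T m = 0) :
    ∀ k, m ≤ k → beta T k = 0 := by
  intro k hk
  induction k, hk using Nat.le_induction with
  | base => exact hT
  | succ n hn ih => rw [beta_succ, ih]; simp


lemma A_eq (T : H →L[ℂ] H) (n : ℕ) :
    (ContinuousLinearMap.adjoint T) ^ n * T ^ n
      = ∑ k ∈ Finset.range (n+1), ((n.choose k : ℂ)) • beta T k := by
  induction n with
  | zero => simp [beta]
  | succ n ih =>
    have conj_A : ∀ j : ℕ, ContinuousLinearMap.adjoint T * ((ContinuousLinearMap.adjoint T) ^ j * T ^ j) * T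
      = (ContinuousLinearMap.adjoint T) ^ (j+1) * T ^ (j+1) := by
      intro j
      rw [pow_succ T, pow_succ' (ContinuousLinearMap.adjoint T)]
      simp only [mul_assoc]
    calc (ContinuousLinearMap.adjoint T) ^ (n+1) * T ^ (n+1)
        = ContinuousLinearMap.adjoint T * ((ContinuousLinearMap.adjoint T) ^ n * T ^ n) * T :=
          (conj_A n).symm
      _ = ∑ k ∈ Finset.range (n+1), (n.choose k : ℂ) • (ContinuousLinearMap.adjoint T * beta T k * T) := by
          rw [ih, Finset.mul_sum, Finset.sum_mul]
          exact Finset.sum_congr rfl fun k _ => by rw [mul_smul_comm, smul_mul_assoc]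
      _ = ∑ k ∈ Finset.range (n+1), (n.choose k : ℂ) • (beta T (k+1) + beta T k) := by
          refine Finset.sum_congr rfl fun k _ => ?_
          rw [beta_succ, sub_add_cancel]
      _ = ∑ k ∈ Finset.range (n+1), (n.choose k : ℂ) • beta T (k+1)
            + ∑ k ∈ Finset.range (n+1), (n.choose k : ℂ) • beta T k := by
          rw [← Finset.sum_add_distrib]
          exact Finset.sum_congr rfl fun k _ => smul_add _ _ _
      _ = ∑ k ∈ Finset.range (n+2), ((n+1).choose k : ℂ) • beta T k := by
          rw [Finset.sum_range_succ' (fun k => (((n+1).choose k : ℂ)) • beta T k) (n+1)]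
          have : ∀ k ∈ Finset.range (n+1),
              (((n+1).choose (k+1) : ℂ)) • beta T (k+1)
                = (n.choose k : ℂ) • beta T (k+1) + (n.choose (k+1) : ℂ) • beta T (k+1) := by
            intro k _
            rw [Nat.choose_succ_succ]
            push_cast
            rw [add_smul]
          rw [Finset.sum_congr rfl this, Finset.sum_add_distrib]
          have h2 : ∑ k ∈ Finset.range (n+1), (n.choose (k+1) : ℂ) • beta T (k+1)
              + (((n+1).choose 0 : ℂ)) • beta T 0
              = ∑ k ∈ Finset.range (n+1), (n.choose k : ℂ) • beta T k := by
            have := Finset.sum_range_succ' (fun k => ((n.choose k : ℂ)) • beta T k) n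
            simp only [Nat.choose_zero_right, Nat.cast_one] at this ⊢
            rw [this, Finset.sum_range_succ]
            simp [Nat.choose_succ_self]
          rw [add_assoc, h2]

lemma norm_pow_sq_le (T : H →L[ℂ] H) (m : ℕ) (hT : beta T m = 0) (n : ℕ) (hn : 1 ≤ n) :
    ‖T ^ n‖ * ‖T ^ n‖ ≤ (∑ k ∈ Finset.range m, ‖beta T k‖) * (n : ℝ) ^ m := by
  have h1 : ‖T ^ n‖ * ‖T ^ n‖ = ‖(ContinuousLinearMap.adjoint T) ^ n * T ^ n‖ := by
    rw [← CStarRing.norm_star_mul_self (x := T ^ n), star_pow, star_eq_adjoint]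
  rw [h1, A_eq]
  calc ‖∑ k ∈ Finset.range (n+1), ((n.choose k : ℂ)) • beta T k‖
      ≤ ∑ k ∈ Finset.range (n+1), ‖((n.choose k : ℂ)) • beta T k‖ := norm_sum_le _ _
    _ = ∑ k ∈ Finset.range (n+1), (n.choose k : ℝ) * ‖beta T k‖ := by
        refine Finset.sum_congr rfl fun k _ => ?_
        rw [norm_smul]
        simp
    _ = ∑ k ∈ (Finset.range (n+1)).filter (· < m), (n.choose k : ℝ) * ‖beta T k‖ := by
        refine (Finset.sum_filter_of_ne fun k _ hk => ?_).symm
        by_contra hkm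
        push_neg at hkm
        rw [beta_zero_of_le T m hT k hkm] at hk
        simp at hk
    _ ≤ ∑ k ∈ (Finset.range (n+1)).filter (· < m), (n : ℝ) ^ m * ‖beta T k‖ := by
        refine Finset.sum_le_sum fun k hk => ?_
        refine mul_le_mul_of_nonneg_right ?_ (norm_nonneg _)
        have hk' : k < m := (Finset.mem_filter.mp hk).2
        have : (n.choose k : ℝ) ≤ (n : ℝ) ^ k := by
          exact_mod_cast Nat.choose_le_pow n k
        refine this.trans ?_
        have : (n : ℝ) ^ k ≤ (n : ℝ) ^ m :=
          pow_le_pow_right₀ (by exact_mod_cast hn) hk'.le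
        exact this
    _ ≤ ∑ k ∈ Finset.range m, (n : ℝ) ^ m * ‖beta T k‖ := by
        refine Finset.sum_le_sum_of_subset_of_nonneg ?_ (fun k _ _ => by positivity)
        intro k hk
        exact Finset.mem_range.mpr (Finset.mem_filter.mp hk).2
    _ = (∑ k ∈ Finset.range m, ‖beta T k‖) * (n : ℝ) ^ m := by
        rw [← Finset.mul_sum, mul_comm]

lemma spec_key (T : H →L[ℂ] H) (m : ℕ) (hT : beta T m = 0) :
    ∀ x ∈ spectrum ℂ T, ‖x‖ ≤ 1 := by
  intro x hx
  rcases subsingleton_or_nontrivial H with hs | hnt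
  · exfalso
    have : Subsingleton (H →L[ℂ] H) := inferInstance
    exact (spectrum.mem_iff.mp hx) (isUnit_of_subsingleton _)
  by_contra h
  push_neg at h
  set C : ℝ := ∑ k ∈ Finset.range m, ‖beta T k‖ with hC
  set r : ℝ := ‖x‖ * ‖x‖ with hr
  have hr1 : 1 < r := one_lt_mul_of_lt_of_le h h.le
  have hlo : (fun n : ℕ => ((n : ℝ)) ^ m) =o[Filter.atTop] fun n : ℕ => r ^ n :=
    isLittleO_pow_const_const_pow_of_one_lt m hr1
  have hlo2 : (fun n : ℕ => C * ((n : ℝ)) ^ m) =o[Filter.atTop] fun n : ℕ => r ^ n :=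
    hlo.const_mul_left C
  have hev := hlo2.def one_half_pos
  have hev2 : ∀ᶠ n : ℕ in Filter.atTop, 1 ≤ n := Filter.eventually_ge_atTop 1
  obtain ⟨n, hn1, hn2⟩ := (hev.and hev2).exists
  have hxp : x ^ n ∈ spectrum ℂ (T ^ n) := by
    have := spectrum.subset_polynomial_aeval T (Polynomial.X ^ n : Polynomial ℂ)
      ⟨x, hx, rfl⟩
    simpa using this
  have hnorm : ‖x ^ n‖ ≤ ‖T ^ n‖ := spectrum.norm_le_norm_of_mem hxp
  have hpos : (0 : ℝ) < r ^ n := by positivity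
  have chain : r ^ n ≤ C * (n : ℝ) ^ m := by
    calc r ^ n = ‖x ^ n‖ * ‖x ^ n‖ := by rw [norm_pow]; ring
      _ ≤ ‖T ^ n‖ * ‖T ^ n‖ := mul_le_mul hnorm hnorm (norm_nonneg _) (norm_nonneg _)
      _ ≤ C * (n : ℝ) ^ m := norm_pow_sq_le T m hT n hn2
  have : r ^ n ≤ (1/2) * r ^ n := by
    calc r ^ n ≤ C * (n : ℝ) ^ m := chain
      _ ≤ ‖C * (n : ℝ) ^ m‖ := le_abs_self _
      _ ≤ (1/2) * ‖r ^ n‖ := hn1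
      _ = (1/2) * r ^ n := by rw [Real.norm_of_nonneg hpos.le]
  linarith

theorem spectrum_subset_closedBall (T : H →L[ℂ] H) (m : ℕ) (hT : beta T m = 0) :
    spectrum ℂ T ⊆ Metric.closedBall (0 : ℂ) 1 ∧ spectralRadius ℂ T ≤ 1 := by
  have key := spec_key T m hT
  constructor
  · intro x hx
    simpa [Metric.mem_closedBall, dist_zero_right] using key x hx
  · show (⨆ k ∈ spectrum ℂ T, (‖k‖₊ : ENNReal)) ≤ 1
    refine iSup₂_le fun k hk => ?_
    have h1 : ‖k‖₊ ≤ 1 := by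
      rw [← NNReal.coe_le_coe]
      simpa using key k hk
    exact_mod_cast h1
end

section
/- Let T be a bounded m-isometry on a complex Hilbert space H with m ≥ 1, and let e be a unit cyclic vector. Define the sesquilinear form on analytic polynomials by ⟨z^k, z^l⟩ := ∑_{j=0}^{m−1} C(min(k,l), j) μ_j(l−k), where μ_j(i) = ⟨β_j(T)e, T^i e⟩ for i ≥ 0 and μ_j(−i) = conj(μ_j(i)). Then for all k, l ≥ 0, ⟨z^k, z^l⟩ = ⟨T^k e, T^l e⟩_H. -/
open ContinuousLinearMap

variable {H : Type*} [NormedAddCommGroup H] [InnerProductSpace ℂ H] [CompleteSpace H]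

lemma beta_zero (T : H →L[ℂ] H) : beta T 0 = 1 := by
  simp [beta]

lemma beta_rec (T : H →L[ℂ] H) (j : ℕ) :
    ContinuousLinearMap.adjoint T * beta T j * T = beta T (j + 1) + beta T j := by
  unfold beta
  rw [Finset.mul_sum, Finset.sum_mul]
  rw [Finset.sum_range_succ' (fun i => ((-1 : ℂ) ^ (j + 1 - i) * ((j+1).choose i : ℂ)) •
      ((ContinuousLinearMap.adjoint T) ^ i * T ^ i))]
  rw [Finset.sum_range_succ' (fun i => ((-1 : ℂ) ^ (j - i) * (j.choose i : ℂ)) •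
      ((ContinuousLinearMap.adjoint T) ^ i * T ^ i))]
  have hA : ∀ i : ℕ, ContinuousLinearMap.adjoint T *
      (((-1 : ℂ) ^ (j - i) * (j.choose i : ℂ)) • ((ContinuousLinearMap.adjoint T) ^ i * T ^ i)) * T
      = ((-1 : ℂ) ^ (j - i) * (j.choose i : ℂ)) •
        ((ContinuousLinearMap.adjoint T) ^ (i+1) * T ^ (i+1)) := by
    intro i
    rw [mul_smul_comm, smul_mul_assoc, pow_succ' (ContinuousLinearMap.adjoint T), pow_succ T]
    simp only [mul_assoc]
  simp only [hA]
  -- extend sum on RHS second part from range j to range (j+1)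
  have h2 : ∑ i ∈ Finset.range j, ((-1 : ℂ) ^ (j - (i+1)) * (j.choose (i+1) : ℂ)) •
        ((ContinuousLinearMap.adjoint T) ^ (i+1) * T ^ (i+1))
      = ∑ i ∈ Finset.range (j+1), ((-1 : ℂ) ^ (j - (i+1)) * (j.choose (i+1) : ℂ)) •
        ((ContinuousLinearMap.adjoint T) ^ (i+1) * T ^ (i+1)) := by
    rw [Finset.sum_range_succ, Nat.choose_succ_self]
    simp
  rw [h2, add_add_add_comm]
  have hz : ((-1 : ℂ) ^ (j + 1 - 0) * ((j+1).choose 0 : ℂ)) •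
        ((ContinuousLinearMap.adjoint T) ^ 0 * T ^ 0)
      + ((-1 : ℂ) ^ (j - 0) * (j.choose 0 : ℂ)) •
        ((ContinuousLinearMap.adjoint T) ^ 0 * T ^ 0) = 0 := by
    simp [pow_succ, ← add_smul]
  rw [hz, add_zero, ← Finset.sum_add_distrib]
  apply Finset.sum_congr rfl
  intro i hi
  rw [Finset.mem_range] at hi
  rw [← add_smul]
  congr 1
  have hchoose : (((j+1).choose (i+1) : ℕ) : ℂ) = (j.choose i : ℂ) + (j.choose (i+1) : ℂ) := by
    push_cast [Nat.choose_succ_succ]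
    ring
  have hji : j + 1 - (i + 1) = j - i := by omega
  rw [hji, hchoose]
  rcases le_or_gt (i+1) j with h | h
  · have hd : j - i = (j - (i+1)) + 1 := by omega
    rw [hd]
    ring
  · have hij : i = j := by omega
    subst hij
    simp [Nat.choose_succ_self]

lemma beta_ge_zero (T : H →L[ℂ] H) (m : ℕ) (hT : beta T m = 0) :
    ∀ n, m ≤ n → beta T n = 0 := by
  intro n hn
  induction n with
  | zero => simpa [Nat.le_zero.mp hn] using hT
  | succ n ih =>
    rcases Nat.lt_or_ge m (n+1) with h | h
    · have hb : beta T n = 0 := ih (by omega)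
      have := beta_rec T n
      rw [hb] at this
      simpa using this.symm
    · have : m = n + 1 := by omega
      rw [← this]; exact hT

lemma pow_adj_mul_pow (T : H →L[ℂ] H) (k : ℕ) :
    (ContinuousLinearMap.adjoint T) ^ k * T ^ k
      = ∑ j ∈ Finset.range (k+1), ((k.choose j : ℂ)) • beta T j := by
  induction k with
  | zero => simp [beta_zero]
  | succ k ih =>
    have hstep : (ContinuousLinearMap.adjoint T) ^ (k+1) * T ^ (k+1)
        = ContinuousLinearMap.adjoint T
            * ((ContinuousLinearMap.adjoint T) ^ k * T ^ k) * T := by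
      rw [pow_succ' (ContinuousLinearMap.adjoint T), pow_succ T]
      simp only [mul_assoc]
    rw [hstep, ih, Finset.mul_sum, Finset.sum_mul]
    have hA : ∀ j : ℕ, ContinuousLinearMap.adjoint T * ((k.choose j : ℂ) • beta T j) * T
        = (k.choose j : ℂ) • (beta T (j+1) + beta T j) := by
      intro j
      rw [mul_smul_comm, smul_mul_assoc, beta_rec]
    simp only [hA]
    rw [Finset.sum_range_succ' (fun j => (((k+1).choose j : ℂ)) • beta T j)]
    simp only [smul_add, Finset.sum_add_distrib]
    have h1 : ∑ j ∈ Finset.range (k+1), (((k+1).choose (j+1) : ℕ) : ℂ) • beta T (j+1)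
        = ∑ j ∈ Finset.range (k+1), ((k.choose j : ℂ) • beta T (j+1)
            + (k.choose (j+1) : ℂ) • beta T (j+1)) := by
      apply Finset.sum_congr rfl
      intro j _
      rw [← add_smul]
      congr 1
      push_cast [Nat.choose_succ_succ]
      ring
    rw [h1, Finset.sum_add_distrib]
    have h2 : ∑ j ∈ Finset.range (k+1), (k.choose (j+1) : ℂ) • beta T (j+1)
        = ∑ j ∈ Finset.range k, (k.choose (j+1) : ℂ) • beta T (j+1) := by
      rw [Finset.sum_range_succ, Nat.choose_succ_self]
      simp
    rw [h2]
    have h3 : ∑ j ∈ Finset.range (k+1), (k.choose j : ℂ) • beta T j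
        = ∑ j ∈ Finset.range k, (k.choose (j+1) : ℂ) • beta T (j+1)
            + (((k+1).choose 0 : ℕ) : ℂ) • beta T 0 := by
      rw [Finset.sum_range_succ' (fun j => (k.choose j : ℂ) • beta T j)]
      simp
    rw [h3]
    abel

lemma pow_adj_mul_pow' (T : H →L[ℂ] H) (m : ℕ) (hT : beta T m = 0) (k : ℕ) :
    (ContinuousLinearMap.adjoint T) ^ k * T ^ k
      = ∑ j ∈ Finset.range m, ((k.choose j : ℂ)) • beta T j := by
  rw [pow_adj_mul_pow]
  have hs1 : Finset.range (k+1) ⊆ Finset.range (max (k+1) m) :=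
    Finset.range_subset_range.mpr (le_max_left _ _)
  have hs2 : Finset.range m ⊆ Finset.range (max (k+1) m) :=
    Finset.range_subset_range.mpr (le_max_right _ _)
  rw [Finset.sum_subset hs1, Finset.sum_subset hs2]
  · intro j _ hj
    rw [Finset.mem_range, not_lt] at hj
    rw [beta_ge_zero T m hT j hj, smul_zero]
  · intro j _ hj
    rw [Finset.mem_range, not_lt] at hj
    have : k.choose j = 0 := Nat.choose_eq_zero_of_lt (by omega)
    rw [this]
    simp

lemma key_le (T : H →L[ℂ] H) (m : ℕ) (hT : beta T m = 0) (e : H) (k l : ℕ) (hkl : k ≤ l) :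
    ∑ j ∈ Finset.range m, ((k.choose j : ℂ))
        * (inner ℂ ((T ^ (l - k)) e) ((beta T j) e) : ℂ)
      = (inner ℂ ((T ^ l) e) ((T ^ k) e) : ℂ) := by
  have h1 : ∑ j ∈ Finset.range m, ((k.choose j : ℂ))
        * (inner ℂ ((T ^ (l - k)) e) ((beta T j) e) : ℂ)
      = (inner ℂ ((T ^ (l - k)) e)
          ((∑ j ∈ Finset.range m, ((k.choose j : ℂ)) • beta T j) e) : ℂ) := by
    rw [ContinuousLinearMap.sum_apply, inner_sum]
    apply Finset.sum_congr rfl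
    intro j _
    rw [ContinuousLinearMap.smul_apply, inner_smul_right]
  rw [h1, ← pow_adj_mul_pow' T m hT k]
  have hadj : (ContinuousLinearMap.adjoint T) ^ k = ContinuousLinearMap.adjoint (T ^ k) := by
    rw [← star_eq_adjoint, ← star_eq_adjoint, ← star_pow]
  have hexp : k + (l - k) = l := by omega
  rw [ContinuousLinearMap.mul_apply, hadj, ContinuousLinearMap.adjoint_inner_right,
    ← ContinuousLinearMap.mul_apply, ← pow_add, hexp]

theorem model_form_eq_inner (T : H →L[ℂ] H) (m : ℕ) (hm : 1 ≤ m)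
    (hT : beta T m = 0) (e : H) (he : ‖e‖ = 1)
    (hcyc : (Submodule.span ℂ (Set.range fun k : ℕ => (T ^ k) e)).topologicalClosure = ⊤)
    (μf : ℕ → ℤ → ℂ)
    (hμ : ∀ j i : ℕ, μf j i = (inner ℂ ((T ^ i) e) ((beta T j) e) : ℂ))
    (hherm : ∀ (j : ℕ) (i : ℤ), μf j (-i) = (starRingEnd ℂ) (μf j i)) :
    ∀ k l : ℕ,
      ∑ j ∈ Finset.range m, ((min k l).choose j : ℂ) * μf j ((l : ℤ) - (k : ℤ))
        = (inner ℂ ((T ^ l) e) ((T ^ k) e) : ℂ) := by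
  intro k l
  rcases le_total k l with hkl | hlk
  · have hmin : min k l = k := min_eq_left hkl
    have hcast : (l : ℤ) - (k : ℤ) = ((l - k : ℕ) : ℤ) := by omega
    rw [hmin, hcast]
    calc ∑ j ∈ Finset.range m, (k.choose j : ℂ) * μf j ((l - k : ℕ) : ℤ)
        = ∑ j ∈ Finset.range m, (k.choose j : ℂ)
            * (inner ℂ ((T ^ (l - k)) e) ((beta T j) e) : ℂ) := by
          apply Finset.sum_congr rfl
          intro j _
          rw [hμ j (l - k)]
      _ = _ := key_le T m hT e k l hkl
  · have hmin : min k l = l := min_eq_right hlk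
    have hcast : (l : ℤ) - (k : ℤ) = -(((k - l : ℕ) : ℤ)) := by omega
    rw [hmin, hcast]
    have : ∑ j ∈ Finset.range m, (l.choose j : ℂ) * μf j (-(((k - l : ℕ) : ℤ)))
        = (starRingEnd ℂ) (∑ j ∈ Finset.range m,
            (l.choose j : ℂ) * μf j (((k - l : ℕ) : ℤ))) := by
      rw [map_sum]
      apply Finset.sum_congr rfl
      intro j _
      rw [hherm, map_mul]
      congr 1
      simp
    rw [this]
    have h2 : ∑ j ∈ Finset.range m, (l.choose j : ℂ) * μf j (((k - l : ℕ) : ℤ))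
        = (inner ℂ ((T ^ k) e) ((T ^ l) e) : ℂ) := by
      calc ∑ j ∈ Finset.range m, (l.choose j : ℂ) * μf j (((k - l : ℕ) : ℤ))
          = ∑ j ∈ Finset.range m, (l.choose j : ℂ)
              * (inner ℂ ((T ^ (k - l)) e) ((beta T j) e) : ℂ) := by
            apply Finset.sum_congr rfl
            intro j _
            rw [hμ j (k - l)]
        _ = _ := key_le T m hT e l k hlk
    rw [h2, inner_conj_symm]
end
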